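/- Let A and B be unital *-algebras over ℂ, Θ : A ⊗ B → A ⊗ B a unital *-algebra homomorphism, ω a positive linear functional on A, σ a positive linear functional on B, and B̂ = star b * b for some b ∈ B. Then the pre-instrument applied to ω yields a positive linear functional: for every x ∈ A, ℐ_σ(B̂)(ω)(star x * x) = (ω ⊗ σ)(Θ(star x * x ⊗ B̂)) is a nonnegative real number. -/

import Mathlib

open scoped TensorProduct

noncomputable section

/-- A linear functional on a unital *-algebra over ℂ is *positive* if it takes
nonnegative real values on elements of the form `star x * x`. -/
def IsPositiveLF {A : Type} [Ring A] [Algebra ℂ A] [StarRing A] (φ : A →ₗ[ℂ] ℂ) : Prop :=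
  ∀ x : A, ∃ r : ℝ, 0 ≤ r ∧ φ (star x * x) = (r : ℂ)

/-- A *state* on a unital *-algebra over ℂ: a positive, normalised linear functional
compatible with the star operation. -/
def IsState {A : Type} [Ring A] [Algebra ℂ A] [StarRing A] (φ : A →ₗ[ℂ] ℂ) : Prop :=
  IsPositiveLF φ ∧ φ 1 = 1 ∧ ∀ x : A, φ (star x) = starRingEnd ℂ (φ x)

/-- An element of a *-algebra is a *sum of squares* if it is a finite sum of
elements of the form `star c * c`. -/
def IsSumOfStarSquares {A : Type} [Ring A] [StarRing A] (a : A) : Prop :=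
  ∃ (n : ℕ) (c : Fin n → A), a = ∑ i, star (c i) * c i

/-- The product functional `ω ⊗ σ`, determined by `(ω ⊗ σ)(a ⊗ b) = ω(a) * σ(b)`. -/
def prodLF {A B : Type} [AddCommGroup A] [Module ℂ A] [AddCommGroup B] [Module ℂ B]
    (ω : A →ₗ[ℂ] ℂ) (σ : B →ₗ[ℂ] ℂ) : A ⊗[ℂ] B →ₗ[ℂ] ℂ :=
  (TensorProduct.lid ℂ ℂ).toLinearMap ∘ₗ TensorProduct.map ω σ

lemma prodLF_tmul {A B : Type} [AddCommGroup A] [Module ℂ A] [AddCommGroup B] [Module ℂ B]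
    (ω : A →ₗ[ℂ] ℂ) (σ : B →ₗ[ℂ] ℂ) (a : A) (b : B) :
    prodLF ω σ (a ⊗ₜ[ℂ] b) = ω a * σ b := by
  simp [prodLF, smul_eq_mul, mul_comm]

/-- The slice map `η_σ : A ⊗ B → A`, determined by `η_σ(a ⊗ b) = σ(b) • a`. -/
def sliceLF {A B : Type} [AddCommGroup A] [Module ℂ A] [AddCommGroup B] [Module ℂ B]
    (σ : B →ₗ[ℂ] ℂ) : A ⊗[ℂ] B →ₗ[ℂ] A :=
  (TensorProduct.rid ℂ A).toLinearMap ∘ₗ TensorProduct.map LinearMap.id σ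

lemma sliceLF_tmul {A B : Type} [AddCommGroup A] [Module ℂ A] [AddCommGroup B] [Module ℂ B]
    (σ : B →ₗ[ℂ] ℂ) (a : A) (b : B) : sliceLF σ (a ⊗ₜ[ℂ] b) = σ b • a := by
  simp [sliceLF]

/-- The star operation on the algebraic tensor product `A ⊗[ℂ] B`, determined by
`star (a ⊗ b) = star a ⊗ star b` (it is additive). -/
def tensorStar {A B : Type} [AddCommGroup A] [Module ℂ A] [StarAddMonoid A] [StarModule ℂ A]
    [AddCommGroup B] [Module ℂ B] [StarAddMonoid B] [StarModule ℂ B] :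
    A ⊗[ℂ] B →+ A ⊗[ℂ] B :=
  TensorProduct.liftAddHom
    { toFun := fun a =>
        { toFun := fun b => star a ⊗ₜ[ℂ] star b
          map_zero' := by simp
          map_add' := fun b b' => by simp [star_add, TensorProduct.tmul_add] }
      map_zero' := by ext b; simp
      map_add' := fun a a' => by ext b; simp [star_add, TensorProduct.add_tmul] }
    (fun c a b => by
      simp only [AddMonoidHom.coe_mk, ZeroHom.coe_mk, star_smul, starRingEnd_apply,
        TensorProduct.smul_tmul, TensorProduct.smul_tmul'])

@[simp] lemma tensorStar_tmul {A B : Type} [AddCommGroup A] [Module ℂ A] [StarAddMonoid A]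
    [StarModule ℂ A] [AddCommGroup B] [Module ℂ B] [StarAddMonoid B] [StarModule ℂ B]
    (a : A) (b : B) : tensorStar (a ⊗ₜ[ℂ] b) = star a ⊗ₜ[ℂ] star b := rfl

/-- The pre-instrument `ℐ_σ(B̂)` associated to a coupling map `Θ`: it sends the
functional `ω` to the functional `a ↦ (ω ⊗ σ)(Θ(a ⊗ B̂))`. -/
def preInstrument {A B : Type} [Ring A] [Algebra ℂ A] [Ring B] [Algebra ℂ B]
    (Θ : A ⊗[ℂ] B →ₗ[ℂ] A ⊗[ℂ] B) (σ : B →ₗ[ℂ] ℂ) (Bhat : B)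
    (ω : A →ₗ[ℂ] ℂ) : A →ₗ[ℂ] ℂ :=
  prodLF ω σ ∘ₗ Θ ∘ₗ (TensorProduct.mk ℂ A B).flip Bhat

variable {A B : Type}
  [Ring A] [Algebra ℂ A] [StarRing A] [StarModule ℂ A]
  [Ring B] [Algebra ℂ B] [StarRing B] [StarModule ℂ B]


/-- imaginary part of `φ (star z * z)` vanishes for a positive functional. -/
lemma im_pos_eq_zero {A : Type} [Ring A] [Algebra ℂ A] [StarRing A]
    (φ : A →ₗ[ℂ] ℂ) (hφ : ∀ x : A, ∃ r : ℝ, 0 ≤ r ∧ φ (star x * x) = (r : ℂ))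
    (z : A) : (φ (star z * z)).im = 0 := by
  obtain ⟨r, -, h⟩ := hφ z
  rw [h]; simp

lemma herm_of_pos {A : Type} [Ring A] [Algebra ℂ A] [StarRing A] [StarModule ℂ A]
    (φ : A →ₗ[ℂ] ℂ) (hφ : ∀ x : A, ∃ r : ℝ, 0 ≤ r ∧ φ (star x * x) = (r : ℂ))
    (x y : A) : φ (star y * x) = starRingEnd ℂ (φ (star x * y)) := by
  have h1 : (φ (star (x + y) * (x + y))).im = 0 := im_pos_eq_zero φ hφ _
  have h2 : (φ (star (x + Complex.I • y) * (x + Complex.I • y))).im = 0 :=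
    im_pos_eq_zero φ hφ _
  have hx := im_pos_eq_zero φ hφ x
  have hy := im_pos_eq_zero φ hφ y
  have e1 : star (x + y) * (x + y)
      = star x * x + star x * y + star y * x + star y * y := by
    rw [star_add, add_mul, mul_add, mul_add]; abel
  have e2 : star (x + Complex.I • y) * (x + Complex.I • y)
      = star x * x + Complex.I • (star x * y) + (-Complex.I) • (star y * x)
        + star y * y := by
    have hsI : (star Complex.I : ℂ) = -Complex.I := by
      simp [Complex.ext_iff]
    have hII : (-Complex.I) * Complex.I = (1 : ℂ) := by
      simp [Complex.I_mul_I]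
    rw [star_add, star_smul, hsI, add_mul, mul_add, mul_add, mul_smul_comm,
      smul_mul_assoc, smul_mul_assoc, mul_smul_comm, smul_smul, hII, one_smul]
    abel
  rw [e1] at h1
  rw [e2] at h2
  simp only [map_add, map_smul, Complex.add_im, Complex.smul_im, smul_eq_mul,
    Complex.mul_im, Complex.I_re, Complex.I_im, Complex.neg_im, Complex.neg_re] at h1 h2
  set u := φ (star x * y)
  set v := φ (star y * x)
  apply Complex.ext <;> simp only [Complex.conj_re, Complex.conj_im] <;> nlinarith


lemma gram_expand {A : Type} [Ring A] [Algebra ℂ A] [StarRing A] [StarModule ℂ A]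
    (φ : A →ₗ[ℂ] ℂ) {ι : Type} (t : Finset ι) (c : ι → ℂ) (v : ι → A) :
    φ (star (∑ i ∈ t, c i • v i) * ∑ j ∈ t, c j • v j)
      = ∑ i ∈ t, ∑ j ∈ t, starRingEnd ℂ (c i) * c j * φ (star (v i) * v j) := by
  rw [star_sum, Finset.sum_mul_sum, map_sum]
  refine Finset.sum_congr rfl fun i _ => ?_
  rw [map_sum]
  refine Finset.sum_congr rfl fun j _ => ?_
  rw [star_smul, smul_mul_smul_comm, map_smul, smul_eq_mul, ← starRingEnd_apply]

open scoped ComplexOrder in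
lemma prodLF_pos_aux {A B : Type}
    [Ring A] [Algebra ℂ A] [StarRing A] [StarModule ℂ A]
    [Ring B] [Algebra ℂ B] [StarRing B] [StarModule ℂ B]
    (ω : A →ₗ[ℂ] ℂ) (hω : IsPositiveLF ω) (σ : B →ₗ[ℂ] ℂ) (hσ : IsPositiveLF σ)
    (y : A ⊗[ℂ] B) :
    ∃ r : ℝ, 0 ≤ r ∧ prodLF ω σ (tensorStar y * y) = (r : ℂ) := by
  classical
  obtain ⟨S, rfl⟩ := TensorProduct.exists_finset y
  have expand : prodLF ω σ (tensorStar (∑ p ∈ S, p.1 ⊗ₜ[ℂ] p.2) * ∑ p ∈ S, p.1 ⊗ₜ[ℂ] p.2)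
      = ∑ p ∈ S, ∑ q ∈ S, ω (star p.1 * q.1) * σ (star p.2 * q.2) := by
    rw [map_sum tensorStar _ S]
    simp only [tensorStar_tmul]
    rw [Finset.sum_mul_sum]
    simp only [Algebra.TensorProduct.tmul_mul_tmul, map_sum, prodLF_tmul]
  have attach2 : ∑ p ∈ S, ∑ q ∈ S, ω (star p.1 * q.1) * σ (star p.2 * q.2)
      = ∑ p ∈ S.attach, ∑ q ∈ S.attach,
          ω (star (p : A × B).1 * (q : A × B).1) * σ (star (p : A × B).2 * (q : A × B).2) := by
    rw [← Finset.sum_attach S (fun p => ∑ q ∈ S, ω (star p.1 * q.1) * σ (star p.2 * q.2))]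
    exact Finset.sum_congr rfl fun p _ =>
      (Finset.sum_attach S (fun q => ω (star (p : A × B).1 * q.1)
        * σ (star (p : A × B).2 * q.2))).symm
  set N : Matrix {p // p ∈ S} {p // p ∈ S} ℂ :=
    Matrix.of fun p q => σ (star (p : A × B).2 * (q : A × B).2) with hNdef
  have hN : N.PosSemidef := by
    rw [Matrix.posSemidef_iff_dotProduct_mulVec]
    constructor
    · ext p q
      rw [Matrix.conjTranspose_apply]
      show star (σ (star (q : A × B).2 * (p : A × B).2)) = σ (star (p : A × B).2 * (q : A × B).2)
      rw [herm_of_pos σ hσ (p : A × B).2 (q : A × B).2, starRingEnd_apply, star_star]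
    · intro c
      obtain ⟨r, hr, hre⟩ := hσ (∑ q ∈ S.attach, c q • (q : A × B).2)
      have hg := gram_expand σ S.attach c (fun q => (q : A × B).2)
      have hdp : dotProduct (star c) (N.mulVec c)
          = σ (star (∑ q ∈ S.attach, c q • (q : A × B).2)
              * ∑ q ∈ S.attach, c q • (q : A × B).2) := by
        rw [hg, dotProduct, Finset.univ_eq_attach]
        refine Finset.sum_congr rfl fun p _ => ?_
        rw [Matrix.mulVec, dotProduct, Finset.univ_eq_attach, Finset.mul_sum, Pi.star_apply]
        refine Finset.sum_congr rfl fun q _ => ?_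
        show star (c p) * (σ (star (p : A × B).2 * (q : A × B).2) * c q)
          = (starRingEnd ℂ) (c p) * c q * σ (star (p : A × B).2 * (q : A × B).2)
        rw [starRingEnd_apply]
        ring
      rw [hdp, hre]
      exact Complex.zero_le_real.mpr hr
  obtain ⟨C, hC⟩ : ∃ C : Matrix {p // p ∈ S} {p // p ∈ S} ℂ, N = C.conjTranspose * C := by
    open scoped MatrixOrder in
    exact ⟨CFC.sqrt N, by
      rw [(Matrix.nonneg_iff_posSemidef.mp (CFC.sqrt_nonneg N)).1.eq, CFC.sqrt_mul_sqrt_self N hN.nonneg]⟩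
  have hNentry : ∀ p q, N p q = ∑ k ∈ Finset.univ, starRingEnd ℂ (C k p) * C k q := by
    intro p q
    rw [hC, Matrix.mul_apply]
    exact Finset.sum_congr rfl fun k _ => by rw [Matrix.conjTranspose_apply, starRingEnd_apply]
  set u : {p // p ∈ S} → A := fun k => ∑ q ∈ S.attach, C k q • (q : A × B).1 with hu
  choose r hrnn hrval using fun k => hω (u k)
  refine ⟨∑ k ∈ Finset.univ, r k, Finset.sum_nonneg fun k _ => hrnn k, ?_⟩
  rw [expand, attach2]
  calc ∑ p ∈ S.attach, ∑ q ∈ S.attach,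
          ω (star (p : A × B).1 * (q : A × B).1) * σ (star (p : A × B).2 * (q : A × B).2)
      = ∑ p ∈ S.attach, ∑ q ∈ S.attach, ∑ k ∈ Finset.univ,
          starRingEnd ℂ (C k p) * C k q * ω (star (p : A × B).1 * (q : A × B).1) := by
        refine Finset.sum_congr rfl fun p _ => Finset.sum_congr rfl fun q _ => ?_
        have : σ (star (p : A × B).2 * (q : A × B).2) = N p q := rfl
        rw [this, hNentry, Finset.mul_sum]
        exact Finset.sum_congr rfl fun k _ => by ring
    _ = ∑ k ∈ Finset.univ, ∑ p ∈ S.attach, ∑ q ∈ S.attach,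
          starRingEnd ℂ (C k p) * C k q * ω (star (p : A × B).1 * (q : A × B).1) := by
        rw [Finset.sum_congr rfl fun p _ => Finset.sum_comm, Finset.sum_comm]
    _ = ∑ k ∈ Finset.univ, ω (star (u k) * u k) :=
        Finset.sum_congr rfl fun k _ =>
          (gram_expand ω S.attach (C k) (fun q => (q : A × B).1)).symm
    _ = ∑ k ∈ Finset.univ, ((r k : ℝ) : ℂ) := Finset.sum_congr rfl fun k _ => hrval k
    _ = ((∑ k ∈ Finset.univ, r k : ℝ) : ℂ) := by push_cast; rfl

/-- for `B̂ = star b * b`, the pre-instrument applied to a positive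
functional yields a positive functional:
`(ω ⊗ σ)(Θ(star x * x ⊗ B̂))` is a nonnegative real. -/
theorem preinstrument_positive
    (Θ : A ⊗[ℂ] B →ₐ[ℂ] A ⊗[ℂ] B)
    (hΘstar : ∀ y : A ⊗[ℂ] B, Θ (tensorStar y) = tensorStar (Θ y))
    (ω : A →ₗ[ℂ] ℂ) (hω : IsPositiveLF ω) (σ : B →ₗ[ℂ] ℂ) (hσ : IsPositiveLF σ)
    (b : B) (x : A) :
    ∃ r : ℝ, 0 ≤ r ∧
      preInstrument Θ.toLinearMap σ (star b * b) ω (star x * x) = (r : ℂ) := by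
  have key : preInstrument Θ.toLinearMap σ (star b * b) ω (star x * x)
      = prodLF ω σ (tensorStar (Θ (x ⊗ₜ[ℂ] b)) * Θ (x ⊗ₜ[ℂ] b)) := by
    have h1 : (star x * x) ⊗ₜ[ℂ] (star b * b)
        = tensorStar (x ⊗ₜ[ℂ] b) * (x ⊗ₜ[ℂ] b) := by
      rw [tensorStar_tmul, Algebra.TensorProduct.tmul_mul_tmul]
    simp only [preInstrument, LinearMap.comp_apply, LinearMap.flip_apply,
      TensorProduct.mk_apply, AlgHom.toLinearMap_apply]
    rw [h1, map_mul, hΘstar]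
  rw [key]
  exact prodLF_pos_aux ω hω σ hσ _
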